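/- Let K be an algebraically closed field and k a subfield with [K : k] = 2, and fix i ∈ K with i² = −1; write every λ ∈ K as λ = a + bi with a, b ∈ k and let λ̄ = a − bi. For λ = a + bi ∈ K∖k let R_λ be the 2×2 matrix over k with rows (a, −b) and (b, a), and for c ∈ k let J_c(1) be the 1×1 matrix (c). Then for all nonzero λ, μ ∈ K: (1) if λ, μ ∈ k then J_λ(1) ⊗ J_μ(1) ~ J_{λμ}(1); (2) if λ ∈ k and μ ∈ K∖k then J_λ(1) ⊗ R_μ ~ R_{λμ}; and for λ, μ ∈ K∖k: (3) if λ, μ ∈ k·i then R_λ ⊗ R_μ ~ 2J_{λμ}(1) ⊕ 2J_{−λμ}(1); (4) if λ, μ ∉ k·i and λ̄ = rμ for some r ∈ k, then R_λ ⊗ R_μ ~ 2J_{λμ}(1) ⊕ R_{λ̄μ}; (5) if λ, μ ∉ k·i and λ = rμ for some r ∈ k, then R_λ ⊗ R_μ ~ 2J_{λ̄μ}(1) ⊕ R_{λμ}; (6) otherwise R_λ ⊗ R_μ ~ R_{λμ} ⊕ R_{λ̄μ}. -/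

import Mathlib

set_option maxHeartbeats 1000000

open Matrix Kronecker

/-- Similarity of square matrices, allowing reindexing along a bijection of the
(equinumerous) index types. -/
def MatSimilar {k : Type*} [Field k] {α β : Type*} [Fintype α] [DecidableEq α]
    [Fintype β] [DecidableEq β] (A : Matrix α α k) (B : Matrix β β k) : Prop :=
  ∃ e : α ≃ β, ∃ T : Matrix β β k, IsUnit T ∧ Matrix.reindex e e A = T * B * T⁻¹

/-- The `2 × 2` matrix over `k` representing the element `x + y·i` of `K = k(i)`,
i.e. the matrix with rows `(x, -y)` and `(y, x)`. -/
def Rmat {k : Type*} [Field k] (x y : k) : Matrix (Fin 2) (Fin 2) k :=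
  !![x, -y; y, x]

lemma matSimilar_of_conj {k : Type*} [Field k] {α β : Type*} [Fintype α] [DecidableEq α]
    [Fintype β] [DecidableEq β] (A : Matrix α α k) (B : Matrix β β k)
    (e : α ≃ β) (S Si : Matrix β β k) (h1 : S * Si = 1) (h2 : Si * S = 1)
    (h : S * Matrix.reindex e e A = B * S) : MatSimilar A B := by
  refine ⟨e, Si, ⟨⟨Si, S, h2, h1⟩, rfl⟩, ?_⟩
  have hinv : Si⁻¹ = S := Matrix.inv_eq_right_inv h2
  rw [hinv]
  calc Matrix.reindex e e A = (Si * S) * Matrix.reindex e e A := by rw [h2, one_mul]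
    _ = Si * (S * Matrix.reindex e e A) := by rw [mul_assoc]
    _ = Si * B * S := by rw [h, mul_assoc]

def eqv11 : Fin 1 × Fin 1 ≃ Fin 1 where
  toFun _ := 0
  invFun _ := (0, 0)
  left_inv := by decide
  right_inv := by decide

def eqv12 : Fin 1 × Fin 2 ≃ Fin 2 where
  toFun x := x.2
  invFun j := (0, j)
  left_inv := by decide
  right_inv := by decide

def eqv22 : Fin 2 × Fin 2 ≃ (Fin 2 ⊕ Fin 2) where
  toFun x := if x.1 = 0 then Sum.inl x.2 else Sum.inr x.2
  invFun := Sum.elim (fun j => (0, j)) (fun j => (1, j))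
  left_inv := by decide
  right_inv := by decide

def eqv4 : Fin 2 × Fin 2 ≃ Fin 4 where
  toFun x := ![![0, 1], ![2, 3]] x.1 x.2
  invFun j := ![((0:Fin 2), (0:Fin 2)), (0, 1), (1, 0), (1, 1)] j
  left_inv := by decide
  right_inv := by decide

def Smat (k : Type*) [Field k] : Matrix (Fin 2 ⊕ Fin 2) (Fin 2 ⊕ Fin 2) k :=
  Matrix.fromBlocks !![1,0;0,1] !![0,-1;1,0] !![1,0;0,1] !![0,1;-1,0]

def Smat' (k : Type*) [Field k] : Matrix (Fin 2 ⊕ Fin 2) (Fin 2 ⊕ Fin 2) k :=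
  Matrix.fromBlocks !![1,0;0,1] !![0,1;-1,0] !![1,0;0,1] !![0,-1;1,0]

def Smat4 (k : Type*) [Field k] : Matrix (Fin 4) (Fin 4) k :=
  !![1,0,0,-1; 0,1,1,0; 1,0,0,1; 0,1,-1,0]

def Smat4i (k : Type*) [Field k] : Matrix (Fin 4) (Fin 4) k :=
  !![1,0,1,0; 0,1,0,1; 0,1,0,-1; -1,0,1,0]

lemma key6 {k : Type*} [Field k] (h2 : (2:k) ≠ 0) (a b c d : k) :
    MatSimilar (Rmat a b ⊗ₖ Rmat c d)
      (Matrix.fromBlocks (Rmat (a*c-b*d) (a*d+b*c)) 0 0 (Rmat (a*c+b*d) (a*d-b*c))) := by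
  apply matSimilar_of_conj _ _ eqv22 (Smat k) ((2:k)⁻¹ • (Smat k)ᵀ)
  · ext u v
    rcases u with u | u <;> rcases v with v | v <;> fin_cases u <;> fin_cases v <;>
      · simp [Smat, Matrix.mul_apply, Fintype.sum_sum_type, Fin.sum_univ_two,
          Matrix.fromBlocks, Matrix.one_apply, Matrix.vecHead, Matrix.vecTail]
        try field_simp
        try norm_num
  · ext u v
    rcases u with u | u <;> rcases v with v | v <;> fin_cases u <;> fin_cases v <;>
      · simp [Smat, Matrix.mul_apply, Fintype.sum_sum_type, Fin.sum_univ_two,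
          Matrix.fromBlocks, Matrix.one_apply, Matrix.vecHead, Matrix.vecTail]
        try field_simp
        try norm_num
  · ext u v
    rcases u with u | u <;> rcases v with v | v <;> fin_cases u <;> fin_cases v <;>
      · simp [Smat, Rmat, eqv22, Matrix.mul_apply, Fintype.sum_sum_type, Fin.sum_univ_two,
          Matrix.fromBlocks, Equiv.coe_fn_symm_mk, Matrix.submatrix_apply, Matrix.vecHead,
          Matrix.vecTail]
        try ring

lemma key5 {k : Type*} [Field k] (h2 : (2:k) ≠ 0) (a b c d : k) :
    MatSimilar (Rmat a b ⊗ₖ Rmat c d)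
      (Matrix.fromBlocks (Rmat (a*c+b*d) (a*d-b*c)) 0 0 (Rmat (a*c-b*d) (a*d+b*c))) := by
  apply matSimilar_of_conj _ _ eqv22 (Smat' k) ((2:k)⁻¹ • (Smat' k)ᵀ)
  · ext u v
    rcases u with u | u <;> rcases v with v | v <;> fin_cases u <;> fin_cases v <;>
      · simp [Smat', Matrix.mul_apply, Fintype.sum_sum_type, Fin.sum_univ_two,
          Matrix.fromBlocks, Matrix.one_apply, Matrix.vecHead, Matrix.vecTail]
        try field_simp
        try norm_num
  · ext u v
    rcases u with u | u <;> rcases v with v | v <;> fin_cases u <;> fin_cases v <;>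
      · simp [Smat', Matrix.mul_apply, Fintype.sum_sum_type, Fin.sum_univ_two,
          Matrix.fromBlocks, Matrix.one_apply, Matrix.vecHead, Matrix.vecTail]
        try field_simp
        try norm_num
  · ext u v
    rcases u with u | u <;> rcases v with v | v <;> fin_cases u <;> fin_cases v <;>
      · simp [Smat', Rmat, eqv22, Matrix.mul_apply, Fintype.sum_sum_type, Fin.sum_univ_two,
          Matrix.fromBlocks, Equiv.coe_fn_symm_mk, Matrix.submatrix_apply, Matrix.vecHead,
          Matrix.vecTail]
        try ring

lemma key3 {k : Type*} [Field k] (h2 : (2:k) ≠ 0) (b d : k) :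
    MatSimilar (Rmat 0 b ⊗ₖ Rmat 0 d)
      (Matrix.diagonal ![-(b*d), -(b*d), b*d, b*d]) := by
  have hdiag : (Matrix.diagonal ![-(b*d), -(b*d), b*d, b*d] : Matrix (Fin 4) (Fin 4) k)
      = !![-(b*d),0,0,0; 0,-(b*d),0,0; 0,0,b*d,0; 0,0,0,b*d] := by
    ext u v
    fin_cases u <;> fin_cases v <;>
      simp [Matrix.diagonal, Matrix.vecHead, Matrix.vecTail]
  rw [hdiag]
  apply matSimilar_of_conj _ _ eqv4 (Smat4 k) ((2:k)⁻¹ • Smat4i k)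
  · ext u v
    fin_cases u <;> fin_cases v <;>
      · simp [Smat4, Smat4i, Matrix.mul_apply, Fin.sum_univ_four, Matrix.one_apply,
          Matrix.vecHead, Matrix.vecTail]
        try field_simp
        try norm_num
  · ext u v
    fin_cases u <;> fin_cases v <;>
      · simp [Smat4, Smat4i, Matrix.mul_apply, Fin.sum_univ_four, Matrix.one_apply,
          Matrix.vecHead, Matrix.vecTail]
        try field_simp
        try norm_num
  · ext u v
    fin_cases u <;> fin_cases v <;>
      · simp only [Matrix.mul_apply, Fin.sum_univ_four]
        simp [Smat4, Rmat, eqv4, Matrix.mul_apply, Fin.sum_univ_four,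
          Equiv.coe_fn_symm_mk, Matrix.submatrix_apply, Matrix.vecHead, Matrix.vecTail]
        try ring

lemma indep_aux {k K : Type*} [Field k] [Field K] [Algebra k K] {i : K}
    (hik : i ∉ Set.range (algebraMap k K)) {x y : k}
    (h : algebraMap k K x + algebraMap k K y * i = 0) : x = 0 ∧ y = 0 := by
  by_cases hy : y = 0
  · subst hy
    simp only [map_zero, zero_mul, add_zero] at h
    exact ⟨(algebraMap k K).injective (by simpa using h), rfl⟩
  · exfalso
    apply hik
    refine ⟨-(x/y), ?_⟩
    have hy' : algebraMap k K y ≠ 0 := by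
      simpa using (map_ne_zero (algebraMap k K)).mpr hy
    rw [map_neg, map_div₀]
    field_simp
    linear_combination -h

lemma two_ne_aux {k K : Type*} [Field k] [Field K] [Algebra k K] {i : K} (hi : i ^ 2 = -1)
    (hik : i ∉ Set.range (algebraMap k K)) : (2:k) ≠ 0 := by
  intro h20
  apply hik
  refine ⟨-1, ?_⟩
  have h2K : (2:K) = 0 := by
    rw [← map_ofNat (algebraMap k K) 2, h20, map_zero]
  have hsq : (i + 1) ^ 2 = 2 * i := by linear_combination hi
  rw [h2K, zero_mul] at hsq
  have hio : i + 1 = 0 := by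
    have := sq_eq_zero_iff.mp hsq
    exact this
  have : i = -1 := by linear_combination hio
  rw [map_neg, _root_.map_one, this]

theorem stmt18 {k K : Type*} [Field k] [Field K] [Algebra k K] [IsAlgClosed K]
    (hrank : Module.finrank k K = 2) (i : K) (hi : i ^ 2 = -1)
    (a b c d : k) (lam mu lamc : K)
    (hlam : lam = algebraMap k K a + algebraMap k K b * i)
    (hmu : mu = algebraMap k K c + algebraMap k K d * i)
    (hlamc : lamc = algebraMap k K a - algebraMap k K b * i)
    (hlam0 : lam ≠ 0) (hmu0 : mu ≠ 0) :
    -- (1) both scalars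
    ((lam ∈ Set.range (algebraMap k K)) → (mu ∈ Set.range (algebraMap k K)) →
      MatSimilar (!![a] ⊗ₖ !![c]) !![a * c]) ∧
    -- (2) scalar times complex
    ((lam ∈ Set.range (algebraMap k K)) → (mu ∉ Set.range (algebraMap k K)) →
      MatSimilar (!![a] ⊗ₖ Rmat c d) (Rmat (a * c) (a * d))) ∧
    -- (3) both purely imaginary
    ((lam ∉ Set.range (algebraMap k K)) → (mu ∉ Set.range (algebraMap k K)) →
      (lam ∈ Set.range fun r : k => algebraMap k K r * i) →
      (mu ∈ Set.range fun r : k => algebraMap k K r * i) →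
      MatSimilar (Rmat a b ⊗ₖ Rmat c d)
        (Matrix.diagonal
          ![a * c - b * d, a * c - b * d, -(a * c - b * d), -(a * c - b * d)])) ∧
    -- (4) conjugate of lam proportional to mu
    ((lam ∉ Set.range (algebraMap k K)) → (mu ∉ Set.range (algebraMap k K)) →
      (lam ∉ Set.range fun r : k => algebraMap k K r * i) →
      (mu ∉ Set.range fun r : k => algebraMap k K r * i) →
      (∃ r : k, lamc = algebraMap k K r * mu) →
      MatSimilar (Rmat a b ⊗ₖ Rmat c d)
        (Matrix.fromBlocks (Matrix.diagonal ![a * c - b * d, a * c - b * d]) 0 0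
          (Rmat (a * c + b * d) (a * d - b * c)))) ∧
    -- (5) lam proportional to mu
    ((lam ∉ Set.range (algebraMap k K)) → (mu ∉ Set.range (algebraMap k K)) →
      (lam ∉ Set.range fun r : k => algebraMap k K r * i) →
      (mu ∉ Set.range fun r : k => algebraMap k K r * i) →
      (∃ r : k, lam = algebraMap k K r * mu) →
      MatSimilar (Rmat a b ⊗ₖ Rmat c d)
        (Matrix.fromBlocks (Matrix.diagonal ![a * c + b * d, a * c + b * d]) 0 0
          (Rmat (a * c - b * d) (a * d + b * c)))) ∧
    -- (6) otherwise
    ((lam ∉ Set.range (algebraMap k K)) → (mu ∉ Set.range (algebraMap k K)) →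
      ¬((lam ∈ Set.range fun r : k => algebraMap k K r * i) ∧
        (mu ∈ Set.range fun r : k => algebraMap k K r * i)) →
      ¬((lam ∉ Set.range fun r : k => algebraMap k K r * i) ∧
        (mu ∉ Set.range fun r : k => algebraMap k K r * i) ∧
        ∃ r : k, lamc = algebraMap k K r * mu) →
      ¬((lam ∉ Set.range fun r : k => algebraMap k K r * i) ∧
        (mu ∉ Set.range fun r : k => algebraMap k K r * i) ∧
        ∃ r : k, lam = algebraMap k K r * mu) →
      MatSimilar (Rmat a b ⊗ₖ Rmat c d)
        (Matrix.fromBlocks (Rmat (a * c - b * d) (a * d + b * c)) 0 0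
          (Rmat (a * c + b * d) (a * d - b * c)))) := by
  -- derive i ∉ k from lam ∉ k
  have hikOf : lam ∉ Set.range (algebraMap k K) → i ∉ Set.range (algebraMap k K) := by
    intro h1 ⟨t, ht⟩
    exact h1 ⟨a + b * t, by rw [map_add, _root_.map_mul, ht, hlam]⟩
  refine ⟨?_, ?_, ?_, ?_, ?_, ?_⟩
  · -- case 1
    intro _ _
    apply matSimilar_of_conj _ _ eqv11 1 1 (one_mul 1) (one_mul 1)
    ext u v
    fin_cases u <;> fin_cases v <;>
      simp [eqv11, Equiv.coe_fn_symm_mk, Matrix.submatrix_apply]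
  · -- case 2
    intro _ _
    apply matSimilar_of_conj _ _ eqv12 1 1 (one_mul 1) (one_mul 1)
    ext u v
    fin_cases u <;> fin_cases v <;>
      · simp [eqv12, Rmat, Equiv.coe_fn_symm_mk, Matrix.submatrix_apply,
          Matrix.vecHead, Matrix.vecTail]
        try ring
  · -- case 3
    intro h1 h2 h3 h4
    have hik := hikOf h1
    have h2ne : (2:k) ≠ 0 := two_ne_aux hi hik
    obtain ⟨r, hr⟩ := h3
    obtain ⟨s, hs⟩ := h4
    have ha0 : a = 0 := by
      have h0 : algebraMap k K a + algebraMap k K (b - r) * i = 0 := by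
        rw [map_sub]
        linear_combination -hlam - hr
      exact (indep_aux hik h0).1
    have hc0 : c = 0 := by
      have h0 : algebraMap k K c + algebraMap k K (d - s) * i = 0 := by
        rw [map_sub]
        linear_combination -hmu - hs
      exact (indep_aux hik h0).1
    have hvec : (![0*0 - b * d, 0*0 - b * d, -(0*0 - b * d), -(0*0 - b * d)] : Fin 4 → k)
        = ![-(b*d), -(b*d), b*d, b*d] := by
      funext j
      fin_cases j <;> norm_num
    rw [ha0, hc0, hvec]
    exact key3 h2ne b d
  · -- case 4
    intro h1 h2 h3 h4 h5
    have hik := hikOf h1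
    have h2ne : (2:k) ≠ 0 := two_ne_aux hi hik
    obtain ⟨r, hr⟩ := h5
    have h0 : algebraMap k K (a - r * c) + algebraMap k K (-b - r * d) * i = 0 := by
      rw [map_sub, map_sub, map_neg, _root_.map_mul, _root_.map_mul]
      rw [hlamc, hmu] at hr
      linear_combination hr
    have e1 := (indep_aux hik h0).1
    have e2 := (indep_aux hik h0).2
    have heq : a * d + b * c = 0 := by linear_combination d * e1 - c * e2
    have hD : (Matrix.diagonal ![a * c - b * d, a * c - b * d] : Matrix (Fin 2) (Fin 2) k)
        = Rmat (a * c - b * d) (a * d + b * c) := by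
      rw [heq]
      ext u v
      fin_cases u <;> fin_cases v <;> simp [Rmat, Matrix.diagonal]
    rw [hD]
    exact key6 h2ne a b c d
  · -- case 5
    intro h1 h2 h3 h4 h5
    have hik := hikOf h1
    have h2ne : (2:k) ≠ 0 := two_ne_aux hi hik
    obtain ⟨r, hr⟩ := h5
    have h0 : algebraMap k K (a - r * c) + algebraMap k K (b - r * d) * i = 0 := by
      rw [map_sub, map_sub, _root_.map_mul, _root_.map_mul]
      rw [hlam, hmu] at hr
      linear_combination hr
    have e1 := (indep_aux hik h0).1
    have e2 := (indep_aux hik h0).2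
    have heq : a * d - b * c = 0 := by linear_combination d * e1 - c * e2
    have hD : (Matrix.diagonal ![a * c + b * d, a * c + b * d] : Matrix (Fin 2) (Fin 2) k)
        = Rmat (a * c + b * d) (a * d - b * c) := by
      rw [heq]
      ext u v
      fin_cases u <;> fin_cases v <;> simp [Rmat, Matrix.diagonal]
    rw [hD]
    exact key5 h2ne a b c d
  · -- case 6
    intro h1 _ _ _ _
    exact key6 (two_ne_aux hi (hikOf h1)) a b c d
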